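/- arXiv:2002.07290 — 4 statements merged into one kernel-verified Lean document; each statement's English description precedes it below -/
import Mathlib

section
/- Under Assumption A1 (φ is M_φ-Lipschitz convex, F has L_F-Lipschitz Jacobian), let F̃ ≈ F(x), J̃ ≈ F'(x), let T̃_M(x) minimize z ↦ φ(F̃ + J̃(z-x)) + (M/2)‖z-x‖², and set G̃_M(x) := M(x - T̃_M(x)). Then for any β_d > 0: φ(F(T̃_M(x))) ≤ φ(F(x)) + 2M_φ‖F(x) - F̃‖ + (M_φ/(2β_d))‖F'(x) - J̃‖² - ((2M - M_φ L_F - β_d M_φ)/2)‖T̃_M(x) - x‖². -/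
open Set

lemma taylor_aux {E G : Type*} [NormedAddCommGroup E] [NormedSpace ℝ E]
    [NormedAddCommGroup G] [NormedSpace ℝ G] (F : E → G) (L : ℝ)
    (hF : Differentiable ℝ F)
    (hJ : ∀ a b, ‖fderiv ℝ F a - fderiv ℝ F b‖ ≤ L * ‖a - b‖) (x y : E) :
    ‖F y - F x - fderiv ℝ F x (y - x)‖ ≤ L / 2 * ‖y - x‖ ^ 2 := by
  set v := y - x with hv
  set f : ℝ → G := fun t => F (x + t • v) - F x - t • (fderiv ℝ F x v) with hf
  have hpath : ∀ t : ℝ, HasDerivAt (fun s : ℝ => x + s • v) v t := by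
    intro t
    simpa using ((hasDerivAt_id t).smul_const v).const_add x
  have hf' : ∀ t : ℝ, HasDerivAt f (fderiv ℝ F (x + t • v) v - fderiv ℝ F x v) t := by
    intro t
    have h1 : HasDerivAt (fun s : ℝ => F (x + s • v)) (fderiv ℝ F (x + t • v) v) t :=
      (hF (x + t • v)).hasFDerivAt.comp_hasDerivAt t (hpath t)
    have h2 : HasDerivAt (fun s : ℝ => s • (fderiv ℝ F x v)) (fderiv ℝ F x v) t := by
      simpa using (hasDerivAt_id t).smul_const (fderiv ℝ F x v)
    rw [hf]; exact (h1.sub_const (F x)).sub h2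
  have hB : ∀ t : ℝ, HasDerivAt (fun s : ℝ => L * ‖v‖ ^ 2 / 2 * s ^ 2) (L * ‖v‖ ^ 2 * t) t := by
    intro t
    have := (hasDerivAt_pow 2 t).const_mul (L * ‖v‖ ^ 2 / 2)
    refine this.congr_deriv ?_
    ring
  have bound : ∀ t ∈ Ico (0:ℝ) 1,
      ‖fderiv ℝ F (x + t • v) v - fderiv ℝ F x v‖ ≤ L * ‖v‖ ^ 2 * t := by
    intro t ht
    have h1 : ‖fderiv ℝ F (x + t • v) v - fderiv ℝ F x v‖
        ≤ ‖fderiv ℝ F (x + t • v) - fderiv ℝ F x‖ * ‖v‖ := by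
      simpa using (fderiv ℝ F (x + t • v) - fderiv ℝ F x).le_opNorm v
    have h2 := hJ (x + t • v) x
    have h3 : ‖x + t • v - x‖ = t * ‖v‖ := by
      simp [norm_smul, abs_of_nonneg ht.1]
    rw [h3] at h2
    calc ‖fderiv ℝ F (x + t • v) v - fderiv ℝ F x v‖
        ≤ (L * (t * ‖v‖)) * ‖v‖ :=
          h1.trans (mul_le_mul_of_nonneg_right h2 (norm_nonneg v))
      _ = L * ‖v‖ ^ 2 * t := by ring
  have main := image_norm_le_of_norm_deriv_right_le_deriv_boundary
    (f := f) (a := 0) (b := 1)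
    (fun t _ => (hf' t).continuousAt.continuousWithinAt)
    (fun t _ => (hf' t).hasDerivWithinAt)
    (by simp [hf]) hB bound (right_mem_Icc.2 zero_le_one)
  have hfin : f 1 = F y - F x - fderiv ℝ F x v := by
    simp [hf, hv]
  rw [hfin] at main
  calc ‖F y - F x - fderiv ℝ F x (y - x)‖ = ‖F y - F x - fderiv ℝ F x v‖ := by rw [hv]
    _ ≤ L * ‖v‖ ^ 2 / 2 * 1 ^ 2 := main
    _ = L / 2 * ‖y - x‖ ^ 2 := by rw [hv]; ring

lemma amgm_aux (a b β c : ℝ) (hβ : 0 < β) (hc : 0 ≤ c) :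
    c * (a * b) ≤ c / (2 * β) * a ^ 2 + β * c / 2 * b ^ 2 := by
  have h2β : (0:ℝ) < 2 * β := by linarith
  rw [div_mul_eq_mul_div, ← sub_nonneg]
  have key : 0 ≤ (c * (a ^ 2) - 2 * β * (c * (a*b)) + β ^ 2 * (c * b ^ 2)) / (2 * β) := by
    apply div_nonneg _ h2β.le
    nlinarith [mul_nonneg hc (sq_nonneg (a - β * b))]
  calc (0:ℝ) ≤ (c * (a ^ 2) - 2 * β * (c * (a*b)) + β ^ 2 * (c * b ^ 2)) / (2 * β) := key
    _ = c * a ^ 2 / (2 * β) + β * c / 2 * b ^ 2 - c * (a * b) := by field_simp; ring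

theorem stmt3 {p q : ℕ}
    (φ : EuclideanSpace ℝ (Fin q) → ℝ)
    (F : EuclideanSpace ℝ (Fin p) → EuclideanSpace ℝ (Fin q))
    (M_φ L_F M β_d : ℝ)
    (hconv : ConvexOn ℝ Set.univ φ)
    (hφ : ∀ u v, |φ u - φ v| ≤ M_φ * ‖u - v‖)
    (hF : Differentiable ℝ F)
    (hJ : ∀ x y, ‖fderiv ℝ F x - fderiv ℝ F y‖ ≤ L_F * ‖x - y‖)
    (hM : 0 < M) (hβ : 0 < β_d)
    (x T : EuclideanSpace ℝ (Fin p))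
    (Ft : EuclideanSpace ℝ (Fin q))
    (Jt : EuclideanSpace ℝ (Fin p) →L[ℝ] EuclideanSpace ℝ (Fin q))
    (hT : IsMinOn (fun z => φ (Ft + Jt (z - x)) + (M / 2) * ‖z - x‖ ^ 2) Set.univ T) :
    φ (F T) ≤ φ (F x) + 2 * M_φ * ‖F x - Ft‖ + (M_φ / (2 * β_d)) * ‖fderiv ℝ F x - Jt‖ ^ 2
      - ((2 * M - M_φ * L_F - β_d * M_φ) / 2) * ‖T - x‖ ^ 2 := by
  rcases Nat.eq_zero_or_pos q with hq | hq
  · -- trivial codomain: everything collapses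
    subst hq
    have hsub : Subsingleton (EuclideanSpace ℝ (Fin 0)) := by
      constructor; intro a b; ext i; exact absurd i.2 (by omega)
    have hTx : T = x := by
      have h := isMinOn_iff.mp hT x (mem_univ x)
      have heq : Ft + Jt (T - x) = Ft + Jt (x - x) := hsub.elim _ _
      simp only [heq] at h
      simp only [sub_self, norm_zero] at h
      have h2 : (M / 2) * ‖T - x‖ ^ 2 ≤ 0 := by nlinarith [h]
      have h3' : ‖T - x‖ ^ 2 = 0 := le_antisymm (by nlinarith) (sq_nonneg _)
      have h3 : ‖T - x‖ = 0 := by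
        have := sq_eq_zero_iff.mp h3'
        exact this
      exact sub_eq_zero.mp (norm_eq_zero.mp h3)
    subst hTx
    have e1 : F T - Ft = 0 := sub_eq_zero.mpr (hsub.elim _ _)
    have e2 : fderiv ℝ F T - Jt = 0 := by
      apply ContinuousLinearMap.ext; intro z; exact hsub.elim _ _
    have e3 : φ (F T) = φ Ft := by rw [hsub.elim (F T) Ft]
    simp [e1, e2, e3]
  · -- main case : M_φ ≥ 0
    have hMφ : 0 ≤ M_φ := by
      have h := hφ (EuclideanSpace.single ⟨0, hq⟩ (1:ℝ)) 0
      have hn : ‖EuclideanSpace.single (⟨0, hq⟩ : Fin q) (1:ℝ) - 0‖ = 1 := by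
        simp [EuclideanSpace.norm_single]
      rw [hn, mul_one] at h
      exact le_trans (abs_nonneg _) h
    set v := T - x with hv
    set n := ‖T - x‖ with hn
    set J := fderiv ℝ F x with hJdef
    set A := ‖J - Jt‖ with hA
    set d := ‖F x - Ft‖ with hd
    -- step 1: strong minimality
    have key : ∀ t ∈ Set.Ioc (0:ℝ) 1,
        φ (Ft + Jt v) ≤ φ Ft - M * n ^ 2 + (M / 2) * t * n ^ 2 := by
      intro t ht
      have hmin := isMinOn_iff.mp hT (T + t • (x - T)) (mem_univ _)
      have hz : T + t • (x - T) - x = (1 - t) • v := by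
        rw [hv]; module
      have hzn : ‖T + t • (x - T) - x‖ ^ 2 = (1 - t) ^ 2 * n ^ 2 := by
        rw [hz, norm_smul, Real.norm_eq_abs, abs_of_nonneg (by linarith [ht.2]), mul_pow, hn]
      have hcvx : φ (Ft + Jt (T + t • (x - T) - x))
          ≤ (1 - t) * φ (Ft + Jt v) + t * φ Ft := by
        have harg : Ft + Jt (T + t • (x - T) - x)
            = (1 - t) • (Ft + Jt v) + t • Ft := by
          rw [hz, map_smul]; module
        rw [harg]
        exact hconv.2 (mem_univ _) (mem_univ _) (by linarith [ht.2]) ht.1.le (by ring)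
      rw [hzn] at hmin
      have ht0 : (0:ℝ) < t := ht.1
      nlinarith [hmin, hcvx, mul_pos ht0 ht0]
    have key2 : φ (Ft + Jt v) ≤ φ Ft - M * n ^ 2 := by
      apply le_of_forall_pos_le_add
      intro ε hε
      rcases eq_or_lt_of_le (sq_nonneg n) with hc | hc
      · have := key 1 ⟨zero_lt_one, le_refl 1⟩
        rw [← hc] at this ⊢
        linarith
      · set c := (M / 2) * n ^ 2 with hcdef
        have hcpos : 0 < c := by positivity
        have htmem : min 1 (ε / c) ∈ Set.Ioc (0:ℝ) 1 :=
          ⟨lt_min zero_lt_one (div_pos hε hcpos), min_le_left _ _⟩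
        have := key _ htmem
        have hle : (M / 2) * min 1 (ε / c) * n ^ 2 ≤ ε := by
          have h1 : (M / 2) * min 1 (ε / c) * n ^ 2 = min 1 (ε / c) * c := by
            rw [hcdef]; ring
          rw [h1]
          calc min 1 (ε / c) * c ≤ (ε / c) * c :=
                mul_le_mul_of_nonneg_right (min_le_right _ _) hcpos.le
            _ = ε := div_mul_cancel₀ ε hcpos.ne'
        linarith
    -- step 2 : Lipschitz pieces
    have h1 : φ (F T) - φ (Ft + Jt v) ≤ M_φ * ‖F T - (Ft + Jt v)‖ := by
      have := hφ (F T) (Ft + Jt v)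
      exact le_trans (le_abs_self _) this
    have htay : ‖F T - F x - J v‖ ≤ L_F / 2 * n ^ 2 :=
      taylor_aux F L_F hF hJ x T
    have h2 : ‖F T - (Ft + Jt v)‖ ≤ L_F / 2 * n ^ 2 + d + A * n := by
      have hsplit : F T - (Ft + Jt v) = (F T - F x - J v) + (F x - Ft) + ((J - Jt) v) := by
        simp only [ContinuousLinearMap.sub_apply]
        abel
      rw [hsplit]
      have t1 := norm_add_le ((F T - F x - J v) + (F x - Ft)) ((J - Jt) v)
      have t2 := norm_add_le (F T - F x - J v) (F x - Ft)
      have t3 : ‖(J - Jt) v‖ ≤ A * n := by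
        rw [hA, hn, hv]
        exact (J - Jt).le_opNorm _
      calc ‖(F T - F x - J v) + (F x - Ft) + ((J - Jt) v)‖
          ≤ ‖(F T - F x - J v) + (F x - Ft)‖ + ‖(J - Jt) v‖ := t1
        _ ≤ (‖F T - F x - J v‖ + ‖F x - Ft‖) + (A * n) := add_le_add t2 t3
        _ ≤ L_F / 2 * n ^ 2 + d + A * n := by rw [hd]; linarith [htay]
    have h4 : φ Ft ≤ φ (F x) + M_φ * d := by
      have := hφ Ft (F x)
      have h' : φ Ft - φ (F x) ≤ M_φ * ‖Ft - F x‖ := le_trans (le_abs_self _) this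
      rw [norm_sub_rev] at h'
      rw [hd]; linarith
    have h5 : M_φ * (A * n) ≤ M_φ / (2 * β_d) * A ^ 2 + β_d * M_φ / 2 * n ^ 2 :=
      amgm_aux A n β_d M_φ hβ hMφ
    have h7 := mul_le_mul_of_nonneg_left h2 hMφ
    have goal_eq : φ (F x) + 2 * M_φ * d + (M_φ / (2 * β_d)) * A ^ 2
        - ((2 * M - M_φ * L_F - β_d * M_φ) / 2) * n ^ 2
        = φ (F x) + 2 * M_φ * d + M_φ / (2 * β_d) * A ^ 2 - M * n ^ 2
          + M_φ * L_F / 2 * n ^ 2 + β_d * M_φ / 2 * n ^ 2 := by ring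
    have h8 : M_φ * (L_F / 2 * n ^ 2 + d + A * n)
        = M_φ * L_F / 2 * n ^ 2 + M_φ * d + M_φ * (A * n) := by ring
    have final : φ (F T) ≤ φ (F x) + 2 * M_φ * d + (M_φ / (2 * β_d)) * A ^ 2
        - ((2 * M - M_φ * L_F - β_d * M_φ) / 2) * n ^ 2 := by
      rw [goal_eq]
      linarith [h1, h7, h8, key2, h4, h5]
    exact final
end

section
/- Let φ : ℝ^q → ℝ be convex and M_φ-Lipschitz, F : ℝ^p → ℝ^q continuously differentiable with L_F-Lipschitz Jacobian. Fix x ∈ ℝ^p, approximations F̃ ∈ ℝ^q, J̃ ∈ ℝ^{q×p}, and M > 0. Let T̃ be the minimizer of z ↦ φ(F̃ + J̃(z-x)) + (M/2)‖z-x‖², G̃ := M(x - T̃), and let y ∈ ∂φ(F̃ + J̃(T̃ - x)) be the subgradient certifying optimality (so J̃ᵀy = M(x - T̃)). Then ‖F'(T̃)ᵀ y‖ ≤ (1 + M_φ L_F / M) ‖G̃‖ + M_φ ‖F'(x) - J̃‖. -/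
theorem stmt10 {p q : ℕ}
    (φ : EuclideanSpace ℝ (Fin q) → ℝ)
    (F : EuclideanSpace ℝ (Fin p) → EuclideanSpace ℝ (Fin q))
    (M_φ L_F M : ℝ) (hM : 0 < M)
    (hconv : ConvexOn ℝ Set.univ φ)
    (hφ : ∀ u v, |φ u - φ v| ≤ M_φ * ‖u - v‖)
    (hF : Differentiable ℝ F)
    (hJ : ∀ x y, ‖fderiv ℝ F x - fderiv ℝ F y‖ ≤ L_F * ‖x - y‖)
    (x T : EuclideanSpace ℝ (Fin p))
    (Ft : EuclideanSpace ℝ (Fin q))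
    (Jt : EuclideanSpace ℝ (Fin p) →L[ℝ] EuclideanSpace ℝ (Fin q))
    (y : EuclideanSpace ℝ (Fin q))
    (hsub : ∀ v, φ (Ft + Jt (T - x)) + (inner ℝ y (v - (Ft + Jt (T - x))) : ℝ) ≤ φ v)
    (hopt : ContinuousLinearMap.adjoint Jt y = M • (x - T)) :
    ‖ContinuousLinearMap.adjoint (fderiv ℝ F T) y‖
      ≤ (1 + M_φ * L_F / M) * ‖M • (x - T)‖ + M_φ * ‖fderiv ℝ F x - Jt‖ := by
  set w := Ft + Jt (T - x)
  set A := fderiv ℝ F T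
  set B := fderiv ℝ F x
  -- ‖y‖^2 ≤ M_φ * ‖y‖
  have hy2 : ‖y‖ ^ 2 ≤ M_φ * ‖y‖ := by
    have h1 := hsub (w + y)
    have h2 : (inner ℝ y ((w + y) - w) : ℝ) = ‖y‖ ^ 2 := by
      rw [add_sub_cancel_left, real_inner_self_eq_norm_sq]
    rw [h2] at h1
    have h3 : φ (w + y) - φ w ≤ M_φ * ‖(w + y) - w‖ :=
      le_trans (le_abs_self _) (hφ _ _)
    have h4 : ‖(w + y) - w‖ = ‖y‖ := by simp
    rw [h4] at h3
    linarith
  rcases eq_or_lt_of_le (norm_nonneg y) with hy0 | hy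
  · -- y = 0 case
    have hy0' : y = 0 := by
      have := hy0.symm
      exact norm_eq_zero.mp this
    subst hy0'
    have hzero : M • (x - T) = 0 := by
      rw [← hopt]; simp
    rw [hzero]
    simp only [map_zero, norm_zero, mul_zero, zero_add]
    rcases eq_or_ne B Jt with hBJ | hBJ
    · simp [hBJ]
    · have : ∃ u, (B - Jt) u ≠ 0 := by
        by_contra h
        push_neg at h
        exact hBJ (ContinuousLinearMap.ext fun u => sub_eq_zero.mp (by simpa using h u))
      obtain ⟨u, hu⟩ := this
      have hMφ : 0 ≤ M_φ := by
        have h1 := hφ ((B - Jt) u) 0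
        have h2 : 0 < ‖(B - Jt) u - 0‖ := by
          simpa using norm_pos_iff.mpr hu
        nlinarith [abs_nonneg (φ ((B - Jt) u) - φ 0)]
      positivity
  · -- y ≠ 0 case
    have hyM : ‖y‖ ≤ M_φ := by
      nlinarith
    have hMφ : 0 ≤ M_φ := le_trans (le_of_lt hy) hyM
    have key : ContinuousLinearMap.adjoint A y =
        ContinuousLinearMap.adjoint Jt y + (ContinuousLinearMap.adjoint (A - B)) y
          + (ContinuousLinearMap.adjoint (B - Jt)) y := by
      simp only [map_sub, ContinuousLinearMap.sub_apply]
      abel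
    rw [key]
    have t1 : ‖ContinuousLinearMap.adjoint Jt y‖ = ‖M • (x - T)‖ := by rw [hopt]
    have t2 : ‖(ContinuousLinearMap.adjoint (A - B)) y‖ ≤ (L_F * ‖T - x‖) * M_φ := by
      calc ‖(ContinuousLinearMap.adjoint (A - B)) y‖
          ≤ ‖ContinuousLinearMap.adjoint (A - B)‖ * ‖y‖ :=
            ContinuousLinearMap.le_opNorm _ _
        _ = ‖A - B‖ * ‖y‖ := by
            rw [ContinuousLinearMap.adjoint.norm_map]
        _ ≤ (L_F * ‖T - x‖) * M_φ := by
            apply mul_le_mul (hJ T x) hyM (norm_nonneg y)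
            exact le_trans (norm_nonneg _) (hJ T x)
    have t3 : ‖(ContinuousLinearMap.adjoint (B - Jt)) y‖ ≤ M_φ * ‖B - Jt‖ := by
      calc ‖(ContinuousLinearMap.adjoint (B - Jt)) y‖
          ≤ ‖ContinuousLinearMap.adjoint (B - Jt)‖ * ‖y‖ :=
            ContinuousLinearMap.le_opNorm _ _
        _ = ‖B - Jt‖ * ‖y‖ := by rw [ContinuousLinearMap.adjoint.norm_map]
        _ ≤ ‖B - Jt‖ * M_φ := by
            exact mul_le_mul_of_nonneg_left hyM (norm_nonneg _)
        _ = M_φ * ‖B - Jt‖ := mul_comm _ _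
    have hnorm : ‖M • (x - T)‖ = M * ‖x - T‖ := by
      rw [norm_smul, Real.norm_eq_abs, abs_of_pos hM]
    have hrev : ‖T - x‖ = ‖x - T‖ := norm_sub_rev _ _
    have hdiv : M_φ * L_F / M * ‖M • (x - T)‖ = (L_F * ‖T - x‖) * M_φ := by
      rw [hnorm, hrev]
      field_simp
    have total : ‖ContinuousLinearMap.adjoint Jt y + (ContinuousLinearMap.adjoint (A - B)) y
          + (ContinuousLinearMap.adjoint (B - Jt)) y‖
        ≤ ‖M • (x - T)‖ + (L_F * ‖T - x‖) * M_φ + M_φ * ‖B - Jt‖ := by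
      refine le_trans (norm_add₃_le) ?_
      rw [t1]
      exact add_le_add (add_le_add le_rfl t2) t3
    have expand : (1 + M_φ * L_F / M) * ‖M • (x - T)‖
        = ‖M • (x - T)‖ + M_φ * L_F / M * ‖M • (x - T)‖ := by ring
    rw [expand, hdiv]
    exact total
end

section
/- In the setting of the approximate prox-linear step: with T̃ the minimizer of z ↦ φ(F̃ + J̃(z-x)) + (M/2)‖z-x‖², G̃ := M(x - T̃), and r_D := F̃ + J̃(T̃ - x) - F(T̃), one has ‖r_D‖ ≤ ‖F̃ - F(x)‖ + (1/2)‖F'(x) - J̃‖² + ((1 + L_F)/(2M²))‖G̃‖². -/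
open Set

lemma taylor_quad {E F : Type*} [NormedAddCommGroup E] [NormedSpace ℝ E]
    [NormedAddCommGroup F] [NormedSpace ℝ F]
    {f : E → F} {L : ℝ} (hf : Differentiable ℝ f)
    (hL : ∀ x y, ‖fderiv ℝ f x - fderiv ℝ f y‖ ≤ L * ‖x - y‖)
    (x y : E) : ‖f y - f x - fderiv ℝ f x (y - x)‖ ≤ L / 2 * ‖y - x‖ ^ 2 := by
  set v := y - x with hv
  set g : ℝ → F := fun t => f (x + t • v) - t • (fderiv ℝ f x v) with hg
  have hder : ∀ t : ℝ, HasDerivAt g (fderiv ℝ f (x + t • v) v - fderiv ℝ f x v) t := by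
    intro t
    have hc : HasDerivAt (fun t : ℝ => x + t • v) v t := by
      simpa using ((hasDerivAt_id t).smul_const v).const_add x
    have h1 : HasDerivAt (fun t : ℝ => f (x + t • v)) (fderiv ℝ f (x + t • v) v) t := by
      simpa [Function.comp_def] using (hf.differentiableAt.hasFDerivAt).comp_hasDerivAt t hc
    have h2 := h1.sub ((hasDerivAt_id t).smul_const (fderiv ℝ f x v)); rw [one_smul] at h2; exact h2
  have key : ∀ s ∈ Icc (0:ℝ) 1, ‖g s - g 0‖ ≤ L * ‖v‖ ^ 2 * s ^ 2 / 2 := by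
    intro s hs
    have := image_norm_le_of_norm_deriv_right_le_deriv_boundary
      (f := fun t => g t - g 0) (a := 0) (b := 1)
      (f' := fun t => fderiv ℝ f (x + t • v) v - fderiv ℝ f x v)
      (B := fun t => L * ‖v‖ ^ 2 * t ^ 2 / 2) (B' := fun t => L * ‖v‖ ^ 2 * t)
      (Continuous.continuousOn (continuous_iff_continuousAt.2 fun t => ((hder t).sub_const (g 0)).continuousAt)) (fun t _ => (((hder t).sub_const (g 0)).hasDerivWithinAt))
      (by simp) (fun t => by
        have : HasDerivAt (fun t : ℝ => L * ‖v‖ ^ 2 * t ^ 2 / 2)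
            (L * ‖v‖ ^ 2 * (2 * t) / 2) t := by
          exact (((hasDerivAt_pow 2 t).const_mul (L * ‖v‖ ^ 2)).div_const 2).congr_deriv (by ring_nf)
        convert this using 1; ring)
      (fun t ht => by
        calc ‖fderiv ℝ f (x + t • v) v - fderiv ℝ f x v‖
            = ‖(fderiv ℝ f (x + t • v) - fderiv ℝ f x) v‖ := by simp
          _ ≤ ‖fderiv ℝ f (x + t • v) - fderiv ℝ f x‖ * ‖v‖ :=
              ContinuousLinearMap.le_opNorm _ _
          _ ≤ (L * ‖x + t • v - x‖) * ‖v‖ := by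
              have := hL (x + t • v) x
              exact mul_le_mul_of_nonneg_right this (norm_nonneg _)
          _ = L * ‖v‖ ^ 2 * t := by
              rw [add_sub_cancel_left, norm_smul, Real.norm_eq_abs,
                abs_of_nonneg ht.1]; ring)
    exact this hs
  have h1 := key 1 (by norm_num)
  have hg1 : g 1 - g 0 = f y - f x - fderiv ℝ f x (y - x) := by
    simp [hg, hv]; abel
  rw [hg1] at h1
  calc ‖f y - f x - fderiv ℝ f x (y - x)‖ ≤ L * ‖v‖ ^ 2 * 1 ^ 2 / 2 := h1
    _ = L / 2 * ‖y - x‖ ^ 2 := by rw [hv]; ring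

theorem stmt11 {p q : ℕ}
    (F : EuclideanSpace ℝ (Fin p) → EuclideanSpace ℝ (Fin q))
    (φ : EuclideanSpace ℝ (Fin q) → ℝ)
    (M_φ L_F M : ℝ) (hM : 0 < M)
    (hconv : ConvexOn ℝ Set.univ φ)
    (hφ : ∀ u v, |φ u - φ v| ≤ M_φ * ‖u - v‖)
    (hF : Differentiable ℝ F)
    (hJ : ∀ x y, ‖fderiv ℝ F x - fderiv ℝ F y‖ ≤ L_F * ‖x - y‖)
    (x T : EuclideanSpace ℝ (Fin p))
    (Ft : EuclideanSpace ℝ (Fin q))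
    (Jt : EuclideanSpace ℝ (Fin p) →L[ℝ] EuclideanSpace ℝ (Fin q)) :
    ‖Ft + Jt (T - x) - F T‖
      ≤ ‖Ft - F x‖ + (1 / 2) * ‖fderiv ℝ F x - Jt‖ ^ 2
        + ((1 + L_F) / (2 * M ^ 2)) * ‖M • (x - T)‖ ^ 2 := by
  have hdecomp : Ft + Jt (T - x) - F T
      = (Ft - F x) + (Jt - fderiv ℝ F x) (T - x)
        - (F T - F x - fderiv ℝ F x (T - x)) := by
    simp only [ContinuousLinearMap.sub_apply]
    abel
  have h2 : ‖(Jt - fderiv ℝ F x) (T - x)‖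
      ≤ (1 / 2) * ‖fderiv ℝ F x - Jt‖ ^ 2 + (1 / 2) * ‖T - x‖ ^ 2 := by
    calc ‖(Jt - fderiv ℝ F x) (T - x)‖
        ≤ ‖Jt - fderiv ℝ F x‖ * ‖T - x‖ := ContinuousLinearMap.le_opNorm _ _
      _ ≤ (1 / 2) * ‖Jt - fderiv ℝ F x‖ ^ 2 + (1 / 2) * ‖T - x‖ ^ 2 := by
          nlinarith [sq_nonneg (‖Jt - fderiv ℝ F x‖ - ‖T - x‖)]
      _ = (1 / 2) * ‖fderiv ℝ F x - Jt‖ ^ 2 + (1 / 2) * ‖T - x‖ ^ 2 := by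
          rw [norm_sub_rev]
  have h3 := taylor_quad hF hJ x T
  have hnorm : ‖M • (x - T)‖ ^ 2 = M ^ 2 * ‖T - x‖ ^ 2 := by
    rw [norm_smul, Real.norm_eq_abs, abs_of_pos hM, norm_sub_rev, mul_pow]
  have hlast : ((1 + L_F) / (2 * M ^ 2)) * ‖M • (x - T)‖ ^ 2
      = (1 / 2) * ‖T - x‖ ^ 2 + L_F / 2 * ‖T - x‖ ^ 2 := by
    rw [hnorm]; field_simp
  calc ‖Ft + Jt (T - x) - F T‖
      ≤ ‖Ft - F x‖ + ‖(Jt - fderiv ℝ F x) (T - x)‖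
        + ‖F T - F x - fderiv ℝ F x (T - x)‖ := by
        rw [hdecomp]
        exact (norm_sub_le _ _).trans (by gcongr; exact norm_add_le _ _)
    _ ≤ ‖Ft - F x‖ + ((1 / 2) * ‖fderiv ℝ F x - Jt‖ ^ 2 + (1 / 2) * ‖T - x‖ ^ 2)
        + L_F / 2 * ‖T - x‖ ^ 2 := by gcongr
    _ = ‖Ft - F x‖ + (1 / 2) * ‖fderiv ℝ F x - Jt‖ ^ 2
        + ((1 + L_F) / (2 * M ^ 2)) * ‖M • (x - T)‖ ^ 2 := by rw [hlast]; ring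
end

section
/- Let ℒ_t := E[Ψ(x_t)] + (a_t/2) E[‖F̃_t - F(x_t)‖²] + (c_t/2) E[‖J̃_t - F'(x_t)‖²] be a Lyapunov function. Suppose E[Ψ(x_{t+1})] ≤ E[Ψ(x_t)] - (C_g/2)E[‖x_{t+1}-x_t‖²] + (M_φ/ξ)E[‖F̃_t - F(x_t)‖²] + (M_φ/(2β_d))E[‖J̃_t - F'(x_t)‖²] + M_φ ξ, and the estimator recursions E[‖F̃_{t+1} - F(x_{t+1})‖²] ≤ E[‖F̃_t - F(x_t)‖²] + (M_F²/b_{t+1})E[‖x_{t+1}-x_t‖²] and E[‖J̃_{t+1} - F'(x_{t+1})‖²] ≤ E[‖J̃_t - F'(x_t)‖²] + (L_F²/b̂_{t+1})E[‖x_{t+1}-x_t‖²] hold. If a_t ≥ a_{t+1} + 2M_φ/ξ and c_t ≥ c_{t+1} + M_φ/β_d, then ℒ_{t+1} ≤ ℒ_t - (ρ_{t+1}/2)E[‖x_{t+1}-x_t‖²] + M_φ ξ, where ρ_{t+1} := C_g - M_F² a_{t+1}/b_{t+1} - L_F² c_{t+1}/b̂_{t+1}. -/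
theorem stmt13
    (P f j d a c bb bh : ℕ → ℝ) (t : ℕ)
    (C_g M_φ M_F L_F ξ β_d : ℝ)
    (hCg : 0 < C_g) (hMφ : 0 < M_φ) (hMF : 0 < M_F) (hLF : 0 < L_F)
    (hξ : 0 < ξ) (hβ : 0 < β_d)
    (hf : ∀ s, 0 ≤ f s) (hj : ∀ s, 0 ≤ j s) (hd : ∀ s, 0 ≤ d s)
    (ha : ∀ s, 0 ≤ a s) (hc : ∀ s, 0 ≤ c s)
    (hb : ∀ s, 0 < bb s) (hbh : ∀ s, 0 < bh s)
    (hdesc : P (t + 1) ≤ P t - (C_g / 2) * d t + (M_φ / ξ) * f t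
        + (M_φ / (2 * β_d)) * j t + M_φ * ξ)
    (hFrec : f (t + 1) ≤ f t + (M_F ^ 2 / bb (t + 1)) * d t)
    (hJrec : j (t + 1) ≤ j t + (L_F ^ 2 / bh (t + 1)) * d t)
    (haRec : a t ≥ a (t + 1) + 2 * M_φ / ξ)
    (hcRec : c t ≥ c (t + 1) + M_φ / β_d) :
    P (t + 1) + (a (t + 1) / 2) * f (t + 1) + (c (t + 1) / 2) * j (t + 1)
      ≤ P t + (a t / 2) * f t + (c t / 2) * j t
        - ((C_g - M_F ^ 2 * a (t + 1) / bb (t + 1) - L_F ^ 2 * c (t + 1) / bh (t + 1)) / 2) * d t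
        + M_φ * ξ := by
  have h1 : (a (t+1)/2) * f (t+1) ≤ (a (t+1)/2) * f t + (M_F ^ 2 * a (t+1) / bb (t+1) / 2) * d t := by
    calc (a (t+1)/2) * f (t+1) ≤ (a (t+1)/2) * (f t + (M_F ^ 2 / bb (t + 1)) * d t) :=
          mul_le_mul_of_nonneg_left hFrec (by have := ha (t+1); linarith)
      _ = (a (t+1)/2) * f t + (M_F ^ 2 * a (t+1) / bb (t+1) / 2) * d t := by ring
  have h2 : (c (t+1)/2) * j (t+1) ≤ (c (t+1)/2) * j t + (L_F ^ 2 * c (t+1) / bh (t+1) / 2) * d t := by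
    calc (c (t+1)/2) * j (t+1) ≤ (c (t+1)/2) * (j t + (L_F ^ 2 / bh (t + 1)) * d t) :=
          mul_le_mul_of_nonneg_left hJrec (by have := hc (t+1); linarith)
      _ = (c (t+1)/2) * j t + (L_F ^ 2 * c (t+1) / bh (t+1) / 2) * d t := by ring
  have h3 : (a (t+1)/2) * f t + (M_φ / ξ) * f t ≤ (a t / 2) * f t := by
    have := mul_le_mul_of_nonneg_right haRec (by have := hf t; linarith : (0:ℝ) ≤ f t / 2)
    have e1 : (a (t+1) + 2 * M_φ / ξ) * (f t / 2) = (a (t+1)/2) * f t + (M_φ / ξ) * f t := by ring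
    linarith [e1 ▸ this]
  have h4 : (c (t+1)/2) * j t + (M_φ / (2 * β_d)) * j t ≤ (c t / 2) * j t := by
    have := mul_le_mul_of_nonneg_right hcRec (by have := hj t; linarith : (0:ℝ) ≤ j t / 2)
    have e2 : (c (t+1) + M_φ / β_d) * (j t / 2) = (c (t+1)/2) * j t + (M_φ / (2 * β_d)) * j t := by
      have hβ' : β_d ≠ 0 := hβ.ne'
      field_simp
    linarith [e2 ▸ this]
  have hexp : ((C_g - M_F ^ 2 * a (t + 1) / bb (t + 1) - L_F ^ 2 * c (t + 1) / bh (t + 1)) / 2) * d t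
      = (C_g / 2) * d t - (M_F ^ 2 * a (t+1) / bb (t+1) / 2) * d t - (L_F ^ 2 * c (t+1) / bh (t+1) / 2) * d t := by ring
  linarith
end
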